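/- For the single-deletion channel, the weight assignment on {0,1}^{n-1} given by w_x = 1/ρ(x) if μ(x) ≤ 1 and w_x = (1/ρ(x))·(1 - μ(x)/ρ(x)²) otherwise, is a fractional transversal: for every x ∈ {0,1}^n, Σ_{y ∈ B_{D,1}(x)} w_y ≥ 1, where B_{D,1}(x) is the set of length-(n-1) vectors obtainable from x by one deletion. -/

import Mathlib

/-- Extend a length-`n` binary word to `ℕ → Bool` (by `false` beyond `n`). -/
def ext (n : ℕ) (y : Fin n → Bool) : ℕ → Bool :=
  fun i => if h : i < n then y ⟨i, h⟩ else false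

/-- `rho n x`: the number of runs of the length-`n` word `x`. -/
def rho (n : ℕ) (x : ℕ → Bool) : ℕ :=
  1 + ((Finset.range (n - 1)).filter (fun i => x i ≠ x (i + 1))).card

/-- `mu n x`: the number of middle runs of length 1 of the length-`n` word `x`. -/
def mu (n : ℕ) (x : ℕ → Bool) : ℕ :=
  ((Finset.Icc 1 (n - 2)).filter
    (fun i => x (i - 1) ≠ x i ∧ x i ≠ x (i + 1))).card

/-- The weight assigned to a length-`m` word `y`: `1/ρ(y)` if `μ(y) ≤ 1`, and
`(1/ρ(y))(1 - μ(y)/ρ(y)²)` otherwise. -/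
noncomputable def wt (m : ℕ) (y : Fin m → Bool) : ℝ :=
  if mu m (ext m y) ≤ 1 then 1 / (rho m (ext m y) : ℝ)
  else (1 / (rho m (ext m y) : ℝ)) * (1 - (mu m (ext m y) : ℝ) / (rho m (ext m y) : ℝ) ^ 2)

/-- The single-deletion ball `B_{D,1}(x) ⊆ {0,1}^{n-1}`: all words obtained from
the length-`n` word `x` by deleting one coordinate. -/
def ballD (n : ℕ) (x : Fin n → Bool) : Finset (Fin (n - 1) → Bool) :=
  (Finset.range n).image
    (fun i => fun j : Fin (n - 1) =>
      if (j : ℕ) < i then ext n x j else ext n x ((j : ℕ) + 1))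

def del (X : ℕ → Bool) (i : ℕ) : ℕ → Bool := fun j => if j < i then X j else X (j + 1)

lemma del_lt {X : ℕ → Bool} {i j : ℕ} (h : j < i) : del X i j = X j := if_pos h

lemma del_ge {X : ℕ → Bool} {i j : ℕ} (h : ¬ j < i) : del X i j = X (j + 1) := if_neg h

lemma bool_eq {a b c : Bool} (h1 : a ≠ b) (h2 : b ≠ c) : a = c := by
  cases a <;> cases b <;> cases c <;> simp_all

lemma rho_del_le (X : ℕ → Bool) (i k : ℕ) : rho k (del X i) ≤ rho (k + 1) X := by
  unfold rho
  simp only [Nat.add_sub_cancel]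
  apply Nat.add_le_add_left
  apply Finset.card_le_card_of_injOn
      (fun j => if j + 1 < i then j else if i ≤ j then j + 1
        else if X (i - 1) ≠ X i then j else j + 1)
  · intro j hj
    simp only [Finset.mem_coe, Finset.mem_filter, Finset.mem_range] at hj ⊢
    obtain ⟨hj1, hj2⟩ := hj
    by_cases h1 : j + 1 < i
    · rw [del_lt (by omega), del_lt (by omega)] at hj2
      simp only [if_pos h1]
      exact ⟨by omega, hj2⟩
    · by_cases h2 : i ≤ j
      · rw [del_ge (by omega), del_ge (by omega)] at hj2
        simp only [if_neg h1, if_pos h2]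
        exact ⟨by omega, hj2⟩
      · obtain rfl : i = j + 1 := by omega
        rw [del_lt (by omega), del_ge (by omega)] at hj2
        simp only [if_neg h1, if_neg h2, Nat.add_sub_cancel]
        by_cases hb : X j = X (j + 1)
        · rw [if_neg (by simpa using hb)]
          refine ⟨by omega, ?_⟩
          rw [← hb]; exact hj2
        · rw [if_pos hb]
          exact ⟨by omega, hb⟩
  · intro j hj j' hj' h
    simp only at h
    by_cases hX : X (i - 1) ≠ X i
    · simp only [if_pos hX] at h
      split_ifs at h <;> omega
    · simp only [if_neg hX] at h
      split_ifs at h <;> omega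

lemma mu_del_le (X : ℕ → Bool) (i k : ℕ) : mu k (del X i) ≤ mu (k + 1) X + 1 := by
  unfold mu
  have e2 : k + 1 - 2 = k - 1 := by omega
  rw [e2]
  set B := (Finset.Icc 1 (k-1)).filter (fun p => X (p - 1) ≠ X p ∧ X p ≠ X (p + 1)) with hB
  have h1 : ((Finset.Icc 1 (k - 2)).filter
      (fun p => del X i (p - 1) ≠ del X i p ∧ del X i p ≠ del X i (p + 1))).card
      ≤ (insert 0 B).card := by
    apply Finset.card_le_card_of_injOn
        (fun j => if j + 1 < i then j else if i + 1 ≤ j then j + 1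
          else if j = i then (if X i ≠ X (i + 1) then j + 1 else 0)
          else (if X (i - 1) ≠ X i then j else 0))
    · intro j hj
      simp only [Finset.mem_coe, Finset.mem_filter, Finset.mem_Icc] at hj
      obtain ⟨⟨hj0, hj1⟩, hj2, hj3⟩ := hj
      simp only [Finset.mem_coe, Finset.mem_insert, Finset.mem_filter, Finset.mem_Icc, hB]
      by_cases h1 : j + 1 < i
      · rw [del_lt (by omega), del_lt (by omega)] at hj2
        rw [del_lt (by omega), del_lt (by omega)] at hj3
        rw [if_pos h1]
        exact Or.inr ⟨⟨by omega, by omega⟩, hj2, hj3⟩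
      · by_cases h2 : i + 1 ≤ j
        · rw [del_ge (by omega), del_ge (by omega), show j - 1 + 1 = j by omega] at hj2
          rw [del_ge (by omega), del_ge (by omega)] at hj3
          rw [if_neg h1, if_pos h2]
          exact Or.inr ⟨⟨by omega, by omega⟩, by simpa using hj2, hj3⟩
        · by_cases h3 : j = i
          · rw [del_lt (by omega), del_ge (by omega)] at hj2
            rw [del_ge (by omega), del_ge (by omega)] at hj3
            rw [if_neg h1, if_neg h2, if_pos h3, ← h3]
            by_cases hb : X j ≠ X (j + 1)
            · rw [if_pos hb]
              refine Or.inr ⟨⟨by omega, by omega⟩, by simpa using hb, hj3⟩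
            · rw [if_neg hb]; exact Or.inl rfl
          · rw [del_lt (by omega), del_lt (by omega)] at hj2
            rw [del_lt (by omega), del_ge (by omega)] at hj3
            rw [if_neg h1, if_neg h2, if_neg h3, show i = j + 1 from by omega]
            simp only [Nat.add_sub_cancel]
            by_cases hb : X j ≠ X (j + 1)
            · rw [if_pos hb]
              exact Or.inr ⟨⟨by omega, by omega⟩, hj2, hb⟩
            · rw [if_neg hb]; exact Or.inl rfl
    · intro j hj j' hj' h
      simp only [Finset.coe_filter, Set.mem_setOf_eq, Finset.mem_Icc] at hj hj'
      obtain ⟨⟨ha0, ha1⟩, ha2, ha3⟩ := hj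
      obtain ⟨⟨hb0, hb1⟩, hb2, hb3⟩ := hj'
      simp only at h
      by_cases hc1 : X i ≠ X (i + 1)
      · simp only [if_pos hc1] at h
        split_ifs at h <;> omega
      · by_cases hc2 : X (i - 1) ≠ X i
        · simp only [if_neg hc1, if_pos hc2] at h
          split_ifs at h <;> omega
        · have hc1e : X i = X (i + 1) := not_not.mp (by simpa using hc1)
          have hc2e : X (i - 1) = X i := not_not.mp (by simpa using hc2)
          have key : ∀ t : ℕ, 1 ≤ t →
              del X i (t - 1) ≠ del X i t → del X i t ≠ del X i (t + 1) →
              t + 1 < i ∨ i + 1 ≤ t := by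
            intro t ht h2 h3
            by_contra hcon
            push_neg at hcon
            obtain ⟨u1, u2⟩ := hcon
            rcases Nat.lt_or_ge t i with hti | hti
            · -- t = i - 1
              rw [del_lt (by omega), del_ge (by omega)] at h3
              rw [show i = t + 1 from by omega] at hc1e hc2e
              rw [Nat.add_sub_cancel] at hc2e
              exact h3 (hc2e.trans hc1e)
            · -- t = i
              rw [del_lt (by omega), del_ge (by omega)] at h2
              rw [show i = t from by omega] at hc1e hc2e
              exact h2 (hc2e.trans hc1e)
          have hmj := key j ha0 ha2 ha3
          have hmj' := key j' hb0 hb2 hb3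
          simp only [if_neg hc1, if_neg hc2] at h
          split_ifs at h <;> omega
  exact h1.trans (Finset.card_insert_le _ _)

lemma rho_del_mid (X : ℕ → Bool) (i k : ℕ) (hi1 : 1 ≤ i) (hi2 : i < k)
    (ha : X (i - 1) ≠ X i) (hb : X i ≠ X (i + 1)) :
    rho k (del X i) + 2 ≤ rho (k + 1) X := by
  unfold rho
  simp only [Nat.add_sub_cancel]
  set B := (Finset.range k).filter (fun p => X p ≠ X (p + 1)) with hBdef
  have hm1 : i - 1 ∈ B := by
    simp only [hBdef, Finset.mem_filter, Finset.mem_range]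
    refine ⟨by omega, ?_⟩
    rw [show i - 1 + 1 = i from by omega]
    exact ha
  have hm2 : i ∈ B := by
    simp only [hBdef, Finset.mem_filter, Finset.mem_range]
    exact ⟨by omega, hb⟩
  have hcard : 2 ≤ B.card := by
    have hsub : ({i - 1, i} : Finset ℕ) ⊆ B := by
      intro t ht
      simp only [Finset.mem_insert, Finset.mem_singleton] at ht
      rcases ht with rfl | rfl <;> assumption
    have := Finset.card_le_card hsub
    rwa [Finset.card_pair (by omega : i - 1 ≠ i)] at this
  have h1 : ((Finset.range (k - 1)).filter
      (fun p => del X i p ≠ del X i (p + 1))).card ≤ ((B.erase (i - 1)).erase i).card := by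
    apply Finset.card_le_card_of_injOn (fun j => if j + 1 < i then j else j + 1)
    · intro j hj
      simp only [Finset.mem_coe, Finset.mem_filter, Finset.mem_range] at hj
      obtain ⟨hj1, hj2⟩ := hj
      simp only [Finset.mem_coe, Finset.mem_erase, hBdef, Finset.mem_filter, Finset.mem_range]
      by_cases h1 : j + 1 < i
      · rw [del_lt (by omega), del_lt (by omega)] at hj2
        rw [if_pos h1]
        exact ⟨by omega, by omega, by omega, hj2⟩
      · by_cases h2 : j < i
        · -- j = i - 1 : impossible
          exfalso
          rw [del_lt (by omega), del_ge (by omega)] at hj2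
          have : X j = X (j + 1 + 1) := by
            have e : i = j + 1 := by omega
            rw [e] at ha hb
            rw [Nat.add_sub_cancel] at ha
            exact bool_eq ha hb
          exact hj2 this
        · rw [del_ge (by omega), del_ge (by omega)] at hj2
          rw [if_neg h1]
          exact ⟨by omega, by omega, by omega, hj2⟩
    · intro j hj j' hj' h
      simp only at h
      split_ifs at h <;> omega
  have hc1 : ((B.erase (i - 1)).erase i).card = B.card - 2 := by
    rw [Finset.card_erase_of_mem (Finset.mem_erase.mpr ⟨by omega, hm2⟩),
      Finset.card_erase_of_mem hm1]
    omega
  omega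

lemma mu_del_mid (X : ℕ → Bool) (i k : ℕ) (hi1 : 1 ≤ i) (hi2 : i < k)
    (ha : X (i - 1) ≠ X i) (hb : X i ≠ X (i + 1)) :
    mu k (del X i) + 1 ≤ mu (k + 1) X := by
  unfold mu
  have e2 : k + 1 - 2 = k - 1 := by omega
  rw [e2]
  set B := (Finset.Icc 1 (k - 1)).filter
    (fun p => X (p - 1) ≠ X p ∧ X p ≠ X (p + 1)) with hBdef
  have hm : i ∈ B := by
    simp only [hBdef, Finset.mem_filter, Finset.mem_Icc]
    exact ⟨⟨hi1, by omega⟩, ha, hb⟩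
  have h1 : ((Finset.Icc 1 (k - 2)).filter
      (fun p => del X i (p - 1) ≠ del X i p ∧ del X i p ≠ del X i (p + 1))).card
      ≤ (B.erase i).card := by
    apply Finset.card_le_card_of_injOn (fun j => if j + 1 < i then j else j + 1)
    · intro j hj
      simp only [Finset.mem_coe, Finset.mem_filter, Finset.mem_Icc] at hj
      obtain ⟨⟨hj0, hj1⟩, hj2, hj3⟩ := hj
      simp only [Finset.mem_coe, Finset.mem_erase, hBdef, Finset.mem_filter, Finset.mem_Icc]
      have hno : ¬ (i - 1 ≤ j ∧ j ≤ i) := by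
        rintro ⟨u1, u2⟩
        have hXne : X (i - 1) = X (i + 1) := bool_eq ha hb
        rcases Nat.lt_or_ge j i with hji | hji
        · -- j = i - 1
          rw [del_lt (by omega), del_ge (by omega)] at hj3
          rw [show j = i - 1 from by omega, show i - 1 + 1 + 1 = i + 1 from by omega] at hj3
          exact hj3 hXne
        · -- j = i
          rw [del_lt (by omega), del_ge (by omega)] at hj2
          rw [show j - 1 = i - 1 from by omega, show j + 1 = i + 1 from by omega] at hj2
          exact hj2 hXne
      by_cases h1 : j + 1 < i
      · rw [del_lt (by omega), del_lt (by omega)] at hj2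
        rw [del_lt (by omega), del_lt (by omega)] at hj3
        rw [if_pos h1]
        exact ⟨by omega, ⟨by omega, by omega⟩, hj2, hj3⟩
      · have hgt : i + 1 ≤ j := by omega
        rw [del_ge (by omega), del_ge (by omega), show j - 1 + 1 = j from by omega] at hj2
        rw [del_ge (by omega), del_ge (by omega)] at hj3
        rw [if_neg h1]
        refine ⟨by omega, ⟨by omega, by omega⟩, ?_, hj3⟩
        simpa using hj2
    · intro j hj j' hj' h
      simp only at h
      split_ifs at h <;> omega
  have hc1 : (B.erase i).card = B.card - 1 := Finset.card_erase_of_mem hm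
  have hc2 : 1 ≤ B.card := Finset.card_pos.mpr ⟨i, hm⟩
  omega

lemma mu_add_two_le_rho (k : ℕ) (X : ℕ → Bool) (h : mu k X ≠ 0) :
    mu k X + 2 ≤ rho k X := by
  unfold mu rho at *
  set M := (Finset.Icc 1 (k - 2)).filter
    (fun p => X (p - 1) ≠ X p ∧ X p ≠ X (p + 1)) with hMdef
  set T := (Finset.range (k - 1)).filter (fun p => X p ≠ X (p + 1)) with hTdef
  have hne : M.Nonempty := Finset.card_pos.mp (Nat.pos_of_ne_zero h)
  set j0 := M.max' hne with hj0
  have hj0m : j0 ∈ M := M.max'_mem hne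
  have hj0f : j0 ∈ Finset.Icc 1 (k - 2) ∧ _ := Finset.mem_filter.mp hj0m
  have hsub : (M.image (· - 1)) ∪ {j0} ⊆ T := by
    intro t ht
    simp only [Finset.mem_union, Finset.mem_image, Finset.mem_singleton] at ht
    rcases ht with ⟨p, hp, rfl⟩ | rfl
    · obtain ⟨⟨hp1, hp2⟩, hp3, _⟩ := Finset.mem_filter.mp hp |>.imp
        (fun h => Finset.mem_Icc.mp h) id
      simp only [hTdef, Finset.mem_filter, Finset.mem_range]
      rw [show p - 1 + 1 = p from by omega]
      exact ⟨by omega, hp3⟩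
    · obtain ⟨hic, hc1, hc2⟩ : (j0 ∈ Finset.Icc 1 (k - 2)) ∧ _ ∧ _ := by
        have := Finset.mem_filter.mp hj0m
        exact ⟨this.1, this.2.1, this.2.2⟩
      rw [Finset.mem_Icc] at hic
      simp only [hTdef, Finset.mem_filter, Finset.mem_range]
      exact ⟨by omega, hc2⟩
  have hdisj : Disjoint (M.image (· - 1)) ({j0} : Finset ℕ) := by
    simp only [Finset.disjoint_singleton_right, Finset.mem_image, not_exists]
    rintro p ⟨hp, hpe⟩
    have hp1 : 1 ≤ p := (Finset.mem_Icc.mp (Finset.mem_filter.mp hp).1).1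
    have : p = j0 + 1 := by omega
    have := M.le_max' p hp
    omega
  have hinj : (M.image (· - 1)).card = M.card := by
    apply Finset.card_image_of_injOn
    intro a haM b hbM hab
    have ha1 : 1 ≤ a := (Finset.mem_Icc.mp (Finset.mem_filter.mp haM).1).1
    have hb1 : 1 ≤ b := (Finset.mem_Icc.mp (Finset.mem_filter.mp hbM).1).1
    have hab' : a - 1 = b - 1 := hab
    omega
  have := Finset.card_le_card hsub
  rw [Finset.card_union_of_disjoint hdisj, hinj, Finset.card_singleton] at this
  omega

noncomputable def F (a b : ℕ) : ℝ := (1 / (a : ℝ)) * (1 - (b : ℝ) / (a : ℝ) ^ 2)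

lemma rho_pos (n : ℕ) (x : ℕ → Bool) : 1 ≤ rho n x := Nat.le_add_right 1 _

lemma F_le_inv (a b : ℕ) (ha : 1 ≤ a) : F a b ≤ 1 / (a : ℝ) := by
  unfold F
  have ha' : (0:ℝ) < a := by exact_mod_cast ha
  have h1 : (1:ℝ) - (b : ℝ) / (a : ℝ) ^ 2 ≤ 1 := by
    have : (0:ℝ) ≤ (b : ℝ) / (a : ℝ) ^ 2 := by positivity
    linarith
  calc (1 / (a : ℝ)) * (1 - (b : ℝ) / (a : ℝ) ^ 2) ≤ (1 / (a : ℝ)) * 1 := by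
        apply mul_le_mul_of_nonneg_left h1 (by positivity)
    _ = 1 / (a : ℝ) := mul_one _

lemma wt_ge_F (m : ℕ) (y : Fin m → Bool) :
    F (rho m (ext m y)) (mu m (ext m y)) ≤ wt m y := by
  unfold wt
  split_ifs with h
  · exact F_le_inv _ _ (rho_pos _ _)
  · exact le_of_eq rfl

lemma F_anti (a b a' b' : ℕ) (h1 : 1 ≤ a') (h2 : a' ≤ a) (h3 : b' ≤ b)
    (h4 : b' = 0 ∨ b' + 2 ≤ a') : F a b ≤ F a' b' := by
  have ha1 : (1:ℝ) ≤ (a' : ℝ) := by exact_mod_cast h1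
  have ha2 : (a' : ℝ) ≤ (a : ℝ) := by exact_mod_cast h2
  have ha'pos : (0:ℝ) < (a' : ℝ) := by linarith
  have hapos : (0:ℝ) < (a : ℝ) := by linarith
  rcases h4 with h4 | h4
  · subst h4
    have : F a' 0 = 1 / (a' : ℝ) := by unfold F; push_cast; ring
    rw [this]
    calc F a b ≤ 1 / (a : ℝ) := F_le_inv a b (by omega)
      _ ≤ 1 / (a' : ℝ) := by
          apply one_div_le_one_div_of_le ha'pos ha2
  · -- first decrease b to b', then a down to a'
    have hb'2 : (b':ℝ) + 2 ≤ (a':ℝ) := by exact_mod_cast h4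
    have hb'0 : (0:ℝ) ≤ (b':ℝ) := by positivity
    have step1 : F a b ≤ F a b' := by
      unfold F
      have hb : (b' : ℝ) ≤ (b : ℝ) := by exact_mod_cast h3
      have hq : (b':ℝ)/(a:ℝ)^2 ≤ (b:ℝ)/(a:ℝ)^2 :=
        (div_le_div_iff_of_pos_right (by positivity)).mpr hb
      exact mul_le_mul_of_nonneg_left (by linarith) (by positivity)
    have step2 : F a b' ≤ F a' b' := by
      have t1 : (a':ℝ)^2 + (a':ℝ)*(a:ℝ) + (a:ℝ)^2 ≤ 3*(a:ℝ)^2 := by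
        nlinarith [sq_nonneg ((a:ℝ) - (a':ℝ))]
      have t2 : (b':ℝ)*((a':ℝ)^2 + (a':ℝ)*(a:ℝ) + (a:ℝ)^2) ≤ ((a':ℝ) - 2)*(3*(a:ℝ)^2) := by
        apply mul_le_mul (by linarith) t1 (by positivity) (by linarith)
      have t3 : ((a':ℝ) - 2)*(3*(a:ℝ)^2) ≤ (a':ℝ)^2*(a:ℝ)^2 := by
        nlinarith [mul_nonneg (show (0:ℝ) ≤ (a':ℝ)^2 - 3*(a':ℝ) + 6 by
          nlinarith [sq_nonneg (2*(a':ℝ) - 3)]) (sq_nonneg (a:ℝ))]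
      have key : (0:ℝ) ≤ (a':ℝ)^2*(a:ℝ)^2
          - (b':ℝ)*((a':ℝ)^2 + (a':ℝ)*(a:ℝ) + (a:ℝ)^2) := by linarith
      have hid : F a' b' - F a b' =
          (((a:ℝ) - (a':ℝ)) * ((a':ℝ)^2*(a:ℝ)^2
            - (b':ℝ)*((a':ℝ)^2 + (a':ℝ)*(a:ℝ) + (a:ℝ)^2))) / ((a':ℝ)^3 * (a:ℝ)^3) := by
        unfold F
        field_simp
        ring
      have : (0:ℝ) ≤ F a' b' - F a b' := by
        rw [hid]
        apply div_nonneg (mul_nonneg (by linarith) key) (by positivity)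
      linarith
    exact step1.trans step2

lemma key_ineq (r m : ℕ) (hm : 1 ≤ m) (hr : m + 2 ≤ r) :
    1 ≤ (m : ℝ) * F (r - 2) (m - 1) + ((r - m : ℕ) : ℝ) * F r (m + 1) := by
  have c1 : ((r - 2 : ℕ) : ℝ) = (r : ℝ) - 2 := by
    have : (2:ℕ) ≤ r := by omega
    push_cast [Nat.cast_sub this]
    ring
  have c2 : ((m - 1 : ℕ) : ℝ) = (m : ℝ) - 1 := by
    push_cast [Nat.cast_sub hm]
    ring
  have c3 : ((r - m : ℕ) : ℝ) = (r : ℝ) - (m : ℝ) := by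
    push_cast [Nat.cast_sub (by omega : m ≤ r)]
    ring
  unfold F
  rw [c1, c2, c3]
  push_cast
  have hM1' : (1:ℝ) ≤ (m:ℝ) := by exact_mod_cast hm
  have hMR' : (m:ℝ) + 2 ≤ (r:ℝ) := by exact_mod_cast hr
  set R := (r : ℝ) with hR
  set M := (m : ℝ) with hM
  have hM1 : 1 ≤ M := hM1'
  have hMR : M + 2 ≤ R := hMR'
  have hR2 : (0:ℝ) < R - 2 := by linarith
  have hR0 : (0:ℝ) < R := by linarith
  set s := R - M - 2 with hs
  set t := M - 1 with ht
  have hs0 : 0 ≤ s := by simp only [hs]; linarith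
  have ht0 : 0 ≤ t := by simp only [ht]; linarith
  have hRst : R = 3 + s + t := by simp only [hs, ht]; ring
  have hMt : M = 1 + t := by simp only [ht]; ring
  have key : (0:ℝ) ≤ M*R^3*((R-2)^2-(M-1)) + (R-M)*(R-2)^3*(R^2-(M+1)) - (R-2)^3*R^3 := by
    rw [hRst, hMt]
    nlinarith [hs0, ht0, mul_nonneg hs0 ht0, mul_nonneg (mul_nonneg hs0 ht0) ht0,
      mul_nonneg (mul_nonneg hs0 hs0) ht0,
      mul_nonneg (mul_nonneg (mul_nonneg hs0 ht0) ht0) ht0,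
      mul_nonneg (mul_nonneg (mul_nonneg hs0 hs0) ht0) ht0,
      mul_nonneg (mul_nonneg (mul_nonneg hs0 hs0) hs0) ht0,
      mul_nonneg (mul_nonneg (mul_nonneg (mul_nonneg hs0 ht0) ht0) ht0) ht0,
      mul_nonneg (mul_nonneg (mul_nonneg (mul_nonneg hs0 hs0) ht0) ht0) ht0,
      mul_nonneg (mul_nonneg (mul_nonneg (mul_nonneg hs0 hs0) hs0) hs0) ht0,
      mul_nonneg (mul_nonneg (mul_nonneg (mul_nonneg hs0 hs0) hs0) ht0) ht0,
      mul_nonneg (mul_nonneg hs0 hs0) hs0,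
      mul_nonneg (mul_nonneg (mul_nonneg hs0 hs0) hs0) hs0,
      mul_nonneg ht0 ht0, mul_nonneg (mul_nonneg ht0 ht0) ht0,
      mul_nonneg (mul_nonneg (mul_nonneg ht0 ht0) ht0) ht0,
      mul_nonneg (mul_nonneg (mul_nonneg (mul_nonneg ht0 ht0) ht0) ht0) ht0]
  have hid : M * (1/(R-2) * (1 - (M-1)/(R-2)^2)) + (R-M) * (1/R * (1 - (M+1)/R^2)) - 1
      = (M*R^3*((R-2)^2-(M-1)) + (R-M)*(R-2)^3*(R^2-(M+1)) - (R-2)^3*R^3)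
        / ((R-2)^3 * R^3) := by
    field_simp
  have h2 : (0:ℝ) ≤ M * (1/(R-2) * (1 - (M-1)/(R-2)^2))
      + (R-M) * (1/R * (1 - (M+1)/R^2)) - 1 := by
    rw [hid]
    exact div_nonneg key (by positivity)
  linarith

theorem deletion_fractional_transversal (n : ℕ) (hn : 1 ≤ n) :
    ∀ x : Fin n → Bool, 1 ≤ ∑ y ∈ ballD n x, wt (n - 1) y := by
  intro x
  set X := ext n x with hXdef
  set r := rho n X with hrdef
  set m := mu n X with hmdef
  set Df : ℕ → (Fin (n - 1) → Bool) :=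
    (fun i => fun j : Fin (n - 1) => if (j : ℕ) < i then X j else X ((j : ℕ) + 1)) with hDf
  set S : Finset ℕ := (Finset.range n).filter (fun i => i = 0 ∨ X (i - 1) ≠ X i) with hS
  set B : Finset ℕ := (Finset.Icc 1 (n - 2)).filter
    (fun i => X (i - 1) ≠ X i ∧ X i ≠ X (i + 1)) with hB
  -- basic facts
  have hn1 : n - 1 + 1 = n := by omega
  have hext : ∀ i, i < n → ext (n - 1) (Df i) = del X i := by
    intro i hi
    funext j
    by_cases hj : j < n - 1
    · show (if h : j < n - 1 then Df i ⟨j, h⟩ else false) = del X i j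
      rw [dif_pos hj]
      show (if j < i then X j else X (j + 1)) = del X i j
      rfl
    · show (if h : j < n - 1 then Df i ⟨j, h⟩ else false) = del X i j
      rw [dif_neg hj]
      have : ¬ j < i := by omega
      rw [del_ge this, hXdef]
      show false = ext n x (j + 1)
      unfold ext
      rw [dif_neg (by omega)]
  -- ball = image of S under Df
  have hball : ballD n x = S.image Df := by
    apply Finset.Subset.antisymm
    · intro y hy
      unfold ballD at hy
      rw [Finset.mem_image] at hy
      obtain ⟨i, hi, rfl⟩ := hy
      rw [Finset.mem_range] at hi
      have claim : ∀ i, i < n → ∃ i' ∈ S, Df i' = Df i := by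
        intro i
        induction i with
        | zero =>
            intro _
            exact ⟨0, by simp [hS, Finset.mem_filter, Finset.mem_range]; omega, rfl⟩
        | succ i ih =>
            intro hi
            by_cases hc : X i ≠ X (i + 1)
            · refine ⟨i + 1, ?_, rfl⟩
              simp only [hS, Finset.mem_filter, Finset.mem_range]
              exact ⟨hi, Or.inr (by simpa using hc)⟩
            · push_neg at hc
              obtain ⟨i', hi', he⟩ := ih (by omega)
              refine ⟨i', hi', he.trans ?_⟩
              funext j
              show (if (j:ℕ) < i then X j else X (j + 1))
                  = (if (j:ℕ) < i + 1 then X j else X (j + 1))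
              rcases Nat.lt_trichotomy (j : ℕ) i with h1 | h1 | h1
              · rw [if_pos h1, if_pos (by omega)]
              · rw [if_neg (by omega), if_pos (by omega), h1, hc]
              · rw [if_neg (by omega), if_neg (by omega)]
      obtain ⟨i', hi', he⟩ := claim i hi
      rw [Finset.mem_image]
      exact ⟨i', hi', he⟩
    · apply Finset.image_subset_image
      rw [hS]
      exact Finset.filter_subset _ _
  -- injectivity on S
  have hkey : ∀ a b : ℕ, a ∈ S → b ∈ S → a < b → Df a ≠ Df b := by
    intro a b ha hb hab he
    simp only [hS, Finset.mem_filter, Finset.mem_range] at ha hb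
    have hbt : X (b - 1) ≠ X b := by
      rcases hb.2 with h | h
      · omega
      · exact h
    have hj : b - 1 < n - 1 := by omega
    have := congrFun he ⟨b - 1, hj⟩
    simp only [hDf] at this
    rw [if_neg (by simp; omega), if_pos (by simp; omega),
      show b - 1 + 1 = b from by omega] at this
    exact hbt this.symm
  have hinj : Set.InjOn Df ↑S := by
    intro a ha b hb he
    by_contra hne
    rcases Nat.lt_or_ge a b with h | h
    · exact hkey a b ha hb h he
    · exact hkey b a hb ha (by omega) he.symm
  -- card S = r
  have hcardS : S.card = r := by
    have hSeq : S = insert 0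
        (((Finset.range (n - 1)).filter (fun j => X j ≠ X (j + 1))).image (· + 1)) := by
      ext i
      simp only [hS, Finset.mem_filter, Finset.mem_range, Finset.mem_insert,
        Finset.mem_image]
      constructor
      · rintro ⟨hi, h0 | hne⟩
        · exact Or.inl h0
        · rcases Nat.eq_zero_or_pos i with rfl | hpos
          · exact Or.inl rfl
          · refine Or.inr ⟨i - 1, ⟨by omega, ?_⟩, by omega⟩
            rw [show i - 1 + 1 = i from by omega]
            exact hne
      · rintro (rfl | ⟨p, ⟨hp1, hp2⟩, rfl⟩)
        · exact ⟨by omega, Or.inl rfl⟩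
        · refine ⟨by omega, Or.inr ?_⟩
          rw [Nat.add_sub_cancel]
          exact hp2
    rw [hSeq, Finset.card_insert_of_notMem, Finset.card_image_of_injective _
      (add_left_injective 1)]
    · rw [hrdef]; unfold rho; omega
    · simp only [Finset.mem_image, not_exists]
      rintro p ⟨_, hpe⟩
      omega
  have hcardB : B.card = m := by rw [hmdef]; rfl
  have hBS : B ⊆ S := by
    intro i hi
    simp only [hB, Finset.mem_filter, Finset.mem_Icc] at hi
    simp only [hS, Finset.mem_filter, Finset.mem_range]
    exact ⟨by omega, Or.inr hi.2.1⟩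
  -- rewrite sum over ball as sum over S
  rw [hball, Finset.sum_image (fun a ha b hb => hinj ha hb)]
  -- facts about each deleted word
  have hrY : ∀ i, i < n → rho (n - 1) (del X i) ≤ r := by
    intro i hi
    have := rho_del_le X i (n - 1)
    rwa [hn1] at this
  have hmY : ∀ i, i < n → mu (n - 1) (del X i) ≤ m + 1 := by
    intro i hi
    have := mu_del_le X i (n - 1)
    rwa [hn1] at this
  have hside : ∀ i, mu (n - 1) (del X i) = 0 ∨
      mu (n - 1) (del X i) + 2 ≤ rho (n - 1) (del X i) := by
    intro i
    by_cases h : mu (n - 1) (del X i) = 0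
    · exact Or.inl h
    · exact Or.inr (mu_add_two_le_rho _ _ h)
  by_cases hm0 : m = 0
  · -- easy case: all weights are ≥ 1/r
    have hbound : ∀ i ∈ S, 1 / (r : ℝ) ≤ wt (n - 1) (Df i) := by
      intro i hiS
      have hi : i < n := by
        have := hS ▸ hiS
        simp only [Finset.mem_filter, Finset.mem_range] at this
        exact this.1
      have hwt : wt (n - 1) (Df i) = 1 / (rho (n - 1) (del X i) : ℝ) := by
        unfold wt
        rw [hext i hi, if_pos (by have := hmY i hi; omega)]
      rw [hwt]
      apply one_div_le_one_div_of_le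
      · have := rho_pos (n - 1) (del X i); exact_mod_cast Nat.lt_of_lt_of_le Nat.zero_lt_one this
      · exact_mod_cast hrY i hi
    calc (1:ℝ) = S.card * (1 / (r:ℝ)) := by
          rw [hcardS]
          rw [mul_one_div]
          rw [div_self]
          have : 1 ≤ r := rho_pos n X
          positivity
      _ = ∑ _i ∈ S, (1 / (r:ℝ)) := by rw [Finset.sum_const, nsmul_eq_mul]
      _ ≤ ∑ i ∈ S, wt (n - 1) (Df i) := Finset.sum_le_sum hbound
  · -- main case
    have hm1 : 1 ≤ m := by omega
    have hr2 : m + 2 ≤ r := mu_add_two_le_rho n X hm0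
    have hboundB : ∀ i ∈ B, F (r - 2) (m - 1) ≤ wt (n - 1) (Df i) := by
      intro i hiB
      simp only [hB, Finset.mem_filter, Finset.mem_Icc] at hiB
      obtain ⟨⟨hi1, hi2⟩, hc1, hc2⟩ := hiB
      have hi : i < n := by omega
      have hik : i < n - 1 := by omega
      have hrYi := rho_del_mid X i (n - 1) hi1 hik hc1 hc2
      rw [hn1] at hrYi
      have hmYi := mu_del_mid X i (n - 1) hi1 hik hc1 hc2
      rw [hn1] at hmYi
      calc F (r - 2) (m - 1)
          ≤ F (rho (n - 1) (del X i)) (mu (n - 1) (del X i)) := by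
            apply F_anti _ _ _ _ (rho_pos _ _) (by omega) (by omega) (hside i)
        _ ≤ wt (n - 1) (Df i) := by
            have := wt_ge_F (n - 1) (Df i)
            rwa [hext i hi] at this
    have hboundSB : ∀ i ∈ S \ B, F r (m + 1) ≤ wt (n - 1) (Df i) := by
      intro i hiSB
      have hiS := (Finset.mem_sdiff.mp hiSB).1
      have hi : i < n := by
        have := hS ▸ hiS
        simp only [Finset.mem_filter, Finset.mem_range] at this
        exact this.1
      calc F r (m + 1)
          ≤ F (rho (n - 1) (del X i)) (mu (n - 1) (del X i)) := by
            apply F_anti _ _ _ _ (rho_pos _ _) (hrY i hi) (hmY i hi) (hside i)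
        _ ≤ wt (n - 1) (Df i) := by
            have := wt_ge_F (n - 1) (Df i)
            rwa [hext i hi] at this
    have hsplit : ∑ i ∈ S, wt (n - 1) (Df i)
        = ∑ i ∈ S \ B, wt (n - 1) (Df i) + ∑ i ∈ B, wt (n - 1) (Df i) :=
      (Finset.sum_sdiff hBS).symm
    have hsum1 : ((S \ B).card : ℝ) * F r (m + 1) ≤ ∑ i ∈ S \ B, wt (n - 1) (Df i) := by
      have := Finset.card_nsmul_le_sum (S \ B) (fun i => wt (n - 1) (Df i)) _ hboundSB
      rwa [nsmul_eq_mul] at this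
    have hsum2 : (B.card : ℝ) * F (r - 2) (m - 1) ≤ ∑ i ∈ B, wt (n - 1) (Df i) := by
      have := Finset.card_nsmul_le_sum B (fun i => wt (n - 1) (Df i)) _ hboundB
      rwa [nsmul_eq_mul] at this
    have hcardSB : (S \ B).card = r - m := by
      rw [Finset.card_sdiff_of_subset hBS, hcardS, hcardB]
    rw [hsplit]
    have hki := key_ineq r m hm1 hr2
    rw [hcardSB] at hsum1
    rw [hcardB] at hsum2
    linarith
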